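/- Let $A$ be the $3 \times 3$ real matrix with rows $(1,0,1)$, $(-1,1,0)$, $(0,-1,-1)$, let $L := A A^{\top}$, $\Pi := \tfrac{1}{3}\mathbf{1}\mathbf{1}^{\top}$, and for some $\nu \ne 0$ let $L^{\dagger} := (L + \nu \Pi)^{-1} - \tfrac{1}{\nu}\Pi$. Then for every $b \in \mathbb{R}^3$ with $\mathbf{1}^{\top} b = 0$, the subflux vector $\hat{F} := -A^{\top} L^{\dagger}\, b$ satisfies $A \hat{F} = -b$; i.e. the reconstructed internal subfluxes exactly reproduce the prescribed subcell residuals. -/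

import Mathlib

open Matrix

/-- The adjacency matrix (3.36) of the subgrid of a dual triangular cell. -/
def Amat : Matrix (Fin 3) (Fin 3) ℝ := !![1, 0, 1; -1, 1, 0; 0, -1, -1]

/-- The graph Laplacian of the subcell connectivity. -/
def Lmat : Matrix (Fin 3) (Fin 3) ℝ := Amat * Amatᵀ

/-- The orthogonal projection onto the span of the all-ones vector. -/
noncomputable def PiMat : Matrix (Fin 3) (Fin 3) ℝ :=
  (1 / 3 : ℝ) • Matrix.of (fun _ _ => (1 : ℝ))

lemma Lmat_eq : Lmat = !![2, -1, -1; -1, 2, -1; -1, -1, 2] := by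
  ext i j
  fin_cases i <;> fin_cases j <;>
    norm_num [Lmat, Amat, Matrix.mul_apply, Fin.sum_univ_three, Matrix.cons_val_two, Matrix.vecHead, Matrix.vecTail, Function.comp]

lemma LPi_zero : Lmat * PiMat = 0 := by
  rw [Lmat_eq]
  ext i j
  fin_cases i <;> fin_cases j <;>
    norm_num [PiMat, Matrix.mul_apply, Fin.sum_univ_three, Matrix.cons_val_two, Matrix.vecHead, Matrix.vecTail, Function.comp]

lemma PiL_zero : PiMat * Lmat = 0 := by
  rw [Lmat_eq]
  ext i j
  fin_cases i <;> fin_cases j <;>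
    norm_num [PiMat, Matrix.mul_apply, Fin.sum_univ_three, Matrix.cons_val_two, Matrix.vecHead, Matrix.vecTail, Function.comp]

lemma PiPi : PiMat * PiMat = PiMat := by
  ext i j
  fin_cases i <;> fin_cases j <;>
    norm_num [PiMat, Matrix.mul_apply, Fin.sum_univ_three, Matrix.vecHead, Matrix.vecTail, Function.comp]

lemma M_eq (ν : ℝ) : Lmat + ν • PiMat =
    !![2 + ν/3, -1 + ν/3, -1 + ν/3; -1 + ν/3, 2 + ν/3, -1 + ν/3;
       -1 + ν/3, -1 + ν/3, 2 + ν/3] := by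
  rw [Lmat_eq]
  ext i j
  fin_cases i <;> fin_cases j <;> (simp [PiMat, Matrix.vecHead, Matrix.vecTail]; ring)

lemma det_M (ν : ℝ) : (Lmat + ν • PiMat).det = 9 * ν := by
  rw [M_eq, Matrix.det_fin_three]
  norm_num [Matrix.cons_val_two, Matrix.vecHead, Matrix.vecTail]
  ring

theorem subflux_reconstruction_exact (ν : ℝ) (hν : ν ≠ 0)
    (Ldag : Matrix (Fin 3) (Fin 3) ℝ)
    (hLdag : Ldag = (Lmat + ν • PiMat)⁻¹ - (1 / ν) • PiMat)
    (b : Fin 3 → ℝ) (hb : ∑ i : Fin 3, b i = 0)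
    (Fhat : Fin 3 → ℝ) (hFhat : Fhat = -(Amatᵀ *ᵥ (Ldag *ᵥ b))) :
    Amat *ᵥ Fhat = -b := by
  set M := Lmat + ν • PiMat with hM
  have hdet : M.det ≠ 0 := by
    rw [hM, det_M]; exact mul_ne_zero (by norm_num) hν
  have hunit : IsUnit M.det := isUnit_iff_ne_zero.mpr hdet
  have hMinv : M * M⁻¹ = 1 := Matrix.mul_nonsing_inv M hunit
  have hPiM : PiMat * M = ν • PiMat := by
    rw [hM, Matrix.mul_add, PiL_zero, Matrix.mul_smul, PiPi, zero_add]
  have hPiMinv : PiMat * M⁻¹ = ν⁻¹ • PiMat := by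
    have h2 : ν • (PiMat * M⁻¹) = PiMat := by
      calc ν • (PiMat * M⁻¹) = (ν • PiMat) * M⁻¹ := by rw [Matrix.smul_mul]
        _ = PiMat * M * M⁻¹ := by rw [hPiM]
        _ = PiMat := by rw [Matrix.mul_assoc, hMinv, Matrix.mul_one]
    calc PiMat * M⁻¹ = ν⁻¹ • (ν • (PiMat * M⁻¹)) := by
          rw [smul_smul, inv_mul_cancel₀ hν, one_smul]
      _ = ν⁻¹ • PiMat := by rw [h2]
  have hLMinv : Lmat * M⁻¹ = 1 - PiMat := by
    have h3 : Lmat * M⁻¹ + PiMat = 1 := by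
      calc Lmat * M⁻¹ + PiMat = Lmat * M⁻¹ + ν • (ν⁻¹ • PiMat) := by
            rw [smul_smul, mul_inv_cancel₀ hν, one_smul]
        _ = Lmat * M⁻¹ + ν • (PiMat * M⁻¹) := by rw [hPiMinv]
        _ = (Lmat + ν • PiMat) * M⁻¹ := by rw [Matrix.add_mul, Matrix.smul_mul]
        _ = 1 := hMinv
    exact eq_sub_of_add_eq h3
  have hLLdag : Lmat * Ldag = 1 - PiMat := by
    rw [hLdag, Matrix.mul_sub, hLMinv, Matrix.mul_smul, LPi_zero, smul_zero, sub_zero]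
  have hs : b 0 + b 1 + b 2 = 0 := by simpa [Fin.sum_univ_three, Matrix.vecHead, Matrix.vecTail, Function.comp] using hb
  have hPib : PiMat *ᵥ b = 0 := by
    ext i
    fin_cases i <;>
      simp [PiMat, Matrix.mulVec, dotProduct, Fin.sum_univ_three, Matrix.vecHead, Matrix.vecTail, Function.comp] <;> linarith
  calc Amat *ᵥ Fhat = -(Amat *ᵥ (Amatᵀ *ᵥ (Ldag *ᵥ b))) := by
        rw [hFhat, Matrix.mulVec_neg]
    _ = -((Lmat * Ldag) *ᵥ b) := by
        rw [Matrix.mulVec_mulVec, Matrix.mulVec_mulVec, Lmat, Matrix.mul_assoc]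
    _ = -b := by
        rw [hLLdag, Matrix.sub_mulVec, Matrix.one_mulVec, hPib, sub_zero]
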